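/- Let T be a pruned tree on a non-empty countable set A and let X be the set of infinite branches of T with its cylinder-set topology. For a function f : X → ℝ, the following are equivalent: (1) f is a limsup function; (2) the subgraph subgr(f) = {(x,r) ∈ X × ℝ : f(x) ≥ r} is a Π⁰₂ (i.e., G_δ) subset of X × ℝ; (3) for every r ∈ ℝ, the set {x ∈ X : f(x) ≥ r} is a Π⁰₂ (i.e., G_δ) subset of X. -/

import Mathlib

open Filter Topology

/-- The initial segment `(x₀, …, x_{n-1})` of an infinite sequence `x`. -/
def initSeg {β : Type*} (x : ℕ → β) (n : ℕ) : List β :=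
  List.ofFn fun i : Fin n => x i

/-- `T` is a pruned tree on `A`: it contains the empty sequence, is closed under
prefixes, and every element has a proper extension in `T`. -/
def IsPrunedTree {A : Type*} (T : Set (List A)) : Prop :=
  [] ∈ T ∧ (∀ s ∈ T, ∀ t : List A, t <+: s → t ∈ T) ∧ ∀ s ∈ T, ∃ a : A, s ++ [a] ∈ T

/-- The space `X` of infinite branches of the tree `T`, topologized as a subspace of
the product `ℕ → A` (with `A` discrete); this is exactly the cylinder-set topology. -/
abbrev Branches {A : Type*} (T : Set (List A)) : Type _ :=
  {x : ℕ → A // ∀ n : ℕ, initSeg x n ∈ T}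

/-- The cylinder set `O(s)` of all branches with initial segment `s`. -/
def cyl {A : Type*} (T : Set (List A)) (s : List A) : Set (Branches T) :=
  {x | initSeg x.val s.length = s}

/-- `f : X → ℝ` is a limsup function: there is `u` defined on finite sequences with
`f x = limsup_{t → ∞} u (x₀, …, x_t)` for every branch `x` (the limsup being computed
in the extended reals and required to equal the real number `f x`). -/
def IsLimsupFunction {A : Type*} {T : Set (List A)} (f : Branches T → ℝ) : Prop :=
  ∃ u : List A → ℝ, ∀ x : Branches T,
    (f x : EReal) = Filter.limsup (fun t : ℕ => (u (initSeg x.val (t + 1)) : EReal)) Filter.atTop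

/-- `f` is of Baire class 1: a pointwise limit of continuous functions. -/
def BaireClassOne {X : Type*} [TopologicalSpace X] (f : X → ℝ) : Prop :=
  ∃ g : ℕ → X → ℝ, (∀ n, Continuous (g n)) ∧
    ∀ x, Filter.Tendsto (fun n => g n x) Filter.atTop (nhds (f x))

/-- A Cantor set: a subset homeomorphic to the Cantor space `2^ℕ`. -/
def IsCantorSet {X : Type*} [TopologicalSpace X] (C : Set X) : Prop :=
  Nonempty (C ≃ₜ (ℕ → Bool))

/-- A Bernstein set: neither it nor its complement contains a nonempty perfect set. -/
def IsBernsteinSet {X : Type*} [TopologicalSpace X] (B : Set X) : Prop :=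
  ∀ P : Set X, Perfect P → P.Nonempty → ¬ P ⊆ B ∧ ¬ P ⊆ Bᶜ

/-- A co-analytic set: the complement of an analytic set. -/
def IsCoanalytic {X : Type*} [TopologicalSpace X] (s : Set X) : Prop :=
  MeasureTheory.AnalyticSet sᶜ

/-- The sequence of moves produced by Player I's strategy `σ` against the sequence `v`
of moves of Player II: Player I's `n`-th move depends on `(v₀, …, v_{n-1})`. -/
def playI {A M : Type*} (σ : List M → A) (v : ℕ → M) : ℕ → A :=
  fun n => σ (initSeg v n)

/-- Player II has a winning strategy in the game `Γ(f)`: a strategy for Player II assigns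
to each position `(x₀, …, x_t)` of moves of Player I a real number `v_t` (Player II's own
previous moves being determined), and it is winning if for every run, i.e. every branch
`x` that Player I may produce, `f x = limsup_{t → ∞} v_t`. -/
def PlayerIIWinsGamma {A : Type*} {T : Set (List A)} (f : Branches T → ℝ) : Prop :=
  ∃ τ : List A → ℝ, ∀ x : Branches T,
    (f x : EReal) = Filter.limsup (fun t : ℕ => (τ (initSeg x.val (t + 1)) : EReal)) Filter.atTop

/-- Player I has a winning strategy in the game `Γ_R(f)` where Player II's moves are
restricted to `R`: a strategy for Player I assigns to each position `(v₀, …, v_{n-1})` of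
moves of Player II a point of `A`, and it is winning if against every sequence of moves
of Player II in `R` the moves of Player I are legal (all initial segments lie in `T`) and
the resulting branch `x` satisfies `f x ≠ limsup_{t → ∞} v_t`. -/
def PlayerIWinsGammaR {A : Type*} {T : Set (List A)} (R : Set ℝ) (f : Branches T → ℝ) :
    Prop :=
  ∃ σ : List ℝ → A, ∀ v : ℕ → ℝ, (∀ t, v t ∈ R) →
    ∃ h : ∀ n : ℕ, initSeg (playI σ v) n ∈ T,
      (f ⟨playI σ v, h⟩ : EReal) ≠ Filter.limsup (fun t : ℕ => (v t : EReal)) Filter.atTop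

/-- Player I has a winning strategy in the game `Γ(f)`. -/
def PlayerIWinsGamma {A : Type*} {T : Set (List A)} (f : Branches T → ℝ) : Prop :=
  ∃ σ : List ℝ → A, ∀ v : ℕ → ℝ,
    ∃ h : ∀ n : ℕ, initSeg (playI σ v) n ∈ T,
      (f ⟨playI σ v, h⟩ : EReal) ≠ Filter.limsup (fun t : ℕ => (v t : EReal)) Filter.atTop

/-- Player II has a winning strategy in the game `Γ'(f)`, in which Player II's moves are
pairs `(v_t, w_t)` of reals and Player II wins a run iff
`f x = limsup_{t → ∞} v_t = liminf_{t → ∞} w_t`. -/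
def PlayerIIWinsGamma' {A : Type*} {T : Set (List A)} (f : Branches T → ℝ) : Prop :=
  ∃ τ : List A → ℝ × ℝ, ∀ x : Branches T,
    (f x : EReal) =
      Filter.limsup (fun t : ℕ => ((τ (initSeg x.val (t + 1))).1 : EReal)) Filter.atTop ∧
    (f x : EReal) =
      Filter.liminf (fun t : ℕ => ((τ (initSeg x.val (t + 1))).2 : EReal)) Filter.atTop

/-- Player I has a winning strategy in the game `Γ'(f)`. -/
def PlayerIWinsGamma' {A : Type*} {T : Set (List A)} (f : Branches T → ℝ) : Prop :=
  ∃ σ : List (ℝ × ℝ) → A, ∀ v : ℕ → ℝ × ℝ,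
    ∃ h : ∀ n : ℕ, initSeg (playI σ v) n ∈ T,
      ¬ ((f ⟨playI σ v, h⟩ : EReal) =
            Filter.limsup (fun t : ℕ => ((v t).1 : EReal)) Filter.atTop ∧
         (f ⟨playI σ v, h⟩ : EReal) =
            Filter.liminf (fun t : ℕ => ((v t).2 : EReal)) Filter.atTop)

theorem initSeg_length {β : Type*} (x : ℕ → β) (n : ℕ) : (initSeg x n).length = n := by
  simp [initSeg]

theorem initSeg_succ {β : Type*} (x : ℕ → β) (n : ℕ) :
    initSeg x (n + 1) = initSeg x n ++ [x n] := by
  rw [initSeg, List.ofFn_succ', List.concat_eq_append]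
  simp [initSeg]

theorem initSeg_dropLast {β : Type*} (x : ℕ → β) (n : ℕ) :
    (initSeg x (n + 1)).dropLast = initSeg x n := by
  rw [initSeg_succ]; simp

theorem initSeg_eq_iff {β : Type*} {x y : ℕ → β} {n : ℕ} :
    initSeg x n = initSeg y n ↔ ∀ i, i < n → x i = y i := by
  rw [initSeg, initSeg, List.ofFn_inj, funext_iff]
  exact ⟨fun h i hi => h ⟨i, hi⟩, fun h i => h i i.2⟩

section Aux
variable {A : Type*} {T : Set (List A)}

theorem isOpen_initSeg_set [TopologicalSpace A] [DiscreteTopology A] (t : ℕ) (P : Set (List A)) :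
    IsOpen {x : Branches T | initSeg x.val t ∈ P} := by
  have hc : Continuous (fun x : Branches T => fun i : Fin t => x.val i) :=
    continuous_pi fun i => (continuous_apply (i : ℕ)).comp continuous_subtype_val
  have : {x : Branches T | initSeg x.val t ∈ P}
      = (fun x : Branches T => fun i : Fin t => x.val i) ⁻¹' {v | List.ofFn v ∈ P} := rfl
  rw [this]
  exact (isOpen_discrete _).preimage hc

theorem exists_initSeg_subset_of_isOpen [TopologicalSpace A] {O : Set (Branches T)}
    (hO : IsOpen O) {x : Branches T} (hx : x ∈ O) :
    ∃ t : ℕ, ∀ y : Branches T, initSeg y.val t = initSeg x.val t → y ∈ O := by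
  obtain ⟨O', hO', rfl⟩ := isOpen_induced_iff.mp hO
  obtain ⟨I, v, hv, hsub⟩ := isOpen_pi_iff.mp hO' x.val hx
  refine ⟨I.sup id + 1, fun y hy => ?_⟩
  have h' : ∀ i, i < I.sup id + 1 → y.val i = x.val i := initSeg_eq_iff.mp hy
  have : y.val ∈ (I : Set ℕ).pi v := by
    intro i hi
    rw [h' i (Nat.lt_succ_of_le (Finset.le_sup (f := id) hi))]
    exact (hv i hi).2
  exact hsub this

open Classical in
noncomputable def cntAux (W : ℕ → Set (Branches T)) (k : ℕ) : List A → ℕ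
  | [] => 0
  | a :: r =>
      let p := cntAux W k r
      if cyl T (a :: r).reverse ⊆ W (k + p + 1) then p + 1 else p

noncomputable def cnt (W : ℕ → ℕ → Set (Branches T)) (k : ℕ) (s : List A) : ℕ :=
  cntAux (W k) k s.reverse

open Classical in
theorem cnt_concat (W : ℕ → ℕ → Set (Branches T)) (k : ℕ) (s : List A) (b : A) :
    cnt W k (s ++ [b]) =
      if cyl T (s ++ [b]) ⊆ W k (k + cnt W k s + 1) then cnt W k s + 1 else cnt W k s := by
  rw [cnt, List.reverse_append]
  simp only [List.reverse_cons, List.reverse_nil, List.nil_append, List.singleton_append]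
  rw [cntAux]
  simp [cnt, List.reverse_cons]
  exact if_congr Iff.rfl rfl rfl

noncomputable def uFun (W : ℕ → ℕ → Set (Branches T)) (q : ℕ → ℚ) (s : List A) : ℝ :=
  if h : ((Finset.range s.length).filter fun k => cnt W k s.dropLast < cnt W k s).Nonempty
  then ((Finset.range s.length).filter fun k => cnt W k s.dropLast < cnt W k s).sup' h
    fun k => (q k : ℝ)
  else -(s.length : ℝ)

end Aux

theorem isLimsupFunction_of_levels {A : Type*} [Countable A] [Nonempty A]
    [TopologicalSpace A] [DiscreteTopology A] {T : Set (List A)} (f : Branches T → ℝ)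
    (hG : ∀ r : ℝ, IsGδ {x : Branches T | r ≤ f x}) : IsLimsupFunction f := by
  classical
  obtain ⟨q, hq⟩ := exists_surjective_nat ℚ
  have h1 : ∀ k : ℕ, ∃ W : ℕ → Set (Branches T), (∀ n, IsOpen (W n)) ∧
      {x : Branches T | ((q k : ℝ)) ≤ f x} = ⋂ n, W n := fun k => (hG _).eq_iInter_nat
  choose W hWopen hWeq using h1
  -- decreasing opens
  set U : ℕ → ℕ → Set (Branches T) := fun k n => ⋂ m ∈ Finset.range (n + 1), W k m with hU
  have hUopen : ∀ k n, IsOpen (U k n) := fun k n =>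
    isOpen_biInter_finset fun m _ => hWopen k m
  have hUanti : ∀ k, Antitone (U k) := by
    intro k n m hnm x hx
    simp only [hU, Set.mem_iInter] at hx ⊢
    intro j hj
    exact hx j (by simp at hj ⊢; omega)
  have hUsub : ∀ k n m, m ≤ n → U k n ⊆ W k m := by
    intro k n m hm
    exact Set.biInter_subset_of_mem (Finset.mem_range.mpr (by omega))
  have hUmem : ∀ k n x, (q k : ℝ) ≤ f x → x ∈ U k n := by
    intro k n x hx
    have : x ∈ ⋂ n, W k n := by rw [← hWeq k]; exact hx
    simp only [Set.mem_iInter] at this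
    exact Set.mem_biInter fun m _ => this m
  -- the monotonized family V
  set V : ℕ → ℕ → Set (Branches T) := fun k n =>
    ⋂ j ∈ Finset.range (n + 1), if q j ≤ q k then U j n else Set.univ with hV
  have hVopen : ∀ k n, IsOpen (V k n) := by
    intro k n
    apply isOpen_biInter_finset
    intro j _
    split
    · exact hUopen j n
    · exact isOpen_univ
  have hVanti : ∀ k, Antitone (V k) := by
    intro k n m hnm x hx
    simp only [hV, Set.mem_iInter] at hx ⊢
    intro j hj
    have hj' : j ∈ Finset.range (m + 1) := by simp at hj ⊢; omega
    have h2 := hx j hj'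
    by_cases hc : q j ≤ q k
    · rw [if_pos hc] at h2 ⊢
      exact hUanti j hnm h2
    · rw [if_neg hc]
      exact Set.mem_univ _
  have hVmem : ∀ k n x, (q k : ℝ) ≤ f x → x ∈ V k n := by
    intro k n x hx
    simp only [hV, Set.mem_iInter]
    intro j hj
    split
    · rename_i hqj
      exact hUmem j n x (le_trans (by exact_mod_cast hqj) hx)
    · exact Set.mem_univ _
  have hVlevel : ∀ k x, (∀ n, x ∈ V k n) → (q k : ℝ) ≤ f x := by
    intro k x hx
    have hUx : ∀ n, x ∈ U k n := by
      intro n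
      have h1 := hx (max k n)
      simp only [hV, Set.mem_iInter] at h1
      have h2 := h1 k (by simp)
      rw [if_pos le_rfl] at h2
      exact hUanti k (le_max_right k n) h2
    have : x ∈ ⋂ n, W k n := Set.mem_iInter.2 fun n => hUsub k n n le_rfl (hUx n)
    rw [← hWeq k] at this
    exact this
  have hVmono : ∀ k k' n, k' ≤ n → q k' ≤ q k → V k n ⊆ V k' n := by
    intro k k' n hk' hqk x hx
    simp only [hV, Set.mem_iInter] at hx ⊢
    intro j hj
    split
    · rename_i hqj
      have := hx j hj
      rw [if_pos (le_trans hqj hqk)] at this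
      exact this
    · exact Set.mem_univ _

  -- the limsup witness
  refine ⟨uFun V q, fun x => ?_⟩
  -- basic facts about counters along the branch x
  have hxcyl : ∀ m : ℕ, x ∈ cyl T (initSeg x.val m) := by
    intro m
    simp only [cyl, Set.mem_setOf_eq, initSeg_length]
  have hstep : ∀ k m : ℕ, cnt V k (initSeg x.val (m+1)) =
      if cyl T (initSeg x.val (m+1)) ⊆ V k (k + cnt V k (initSeg x.val m) + 1)
      then cnt V k (initSeg x.val m) + 1 else cnt V k (initSeg x.val m) := by
    intro k m
    rw [initSeg_succ, cnt_concat]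
  have hmono : ∀ k : ℕ, Monotone (fun m => cnt V k (initSeg x.val m)) := by
    intro k
    apply monotone_nat_of_le_succ
    intro m
    show cnt V k (initSeg x.val m) ≤ cnt V k (initSeg x.val (m+1))
    rw [hstep k m]
    split <;> omega
  have hsucc_iff : ∀ k m : ℕ,
      (cnt V k (initSeg x.val m) < cnt V k (initSeg x.val (m+1)) ↔
        cyl T (initSeg x.val (m+1)) ⊆ V k (k + cnt V k (initSeg x.val m) + 1)) := by
    intro k m
    rw [hstep k m]
    by_cases h : cyl T (initSeg x.val (m+1)) ⊆ V k (k + cnt V k (initSeg x.val m) + 1)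
    · simp [h]
    · simp [h]
  have hxV : ∀ k m : ℕ, cnt V k (initSeg x.val m) < cnt V k (initSeg x.val (m+1)) →
      x ∈ V k (k + cnt V k (initSeg x.val m) + 1) := fun k m h =>
    (hsucc_iff k m).mp h (hxcyl (m+1))
  have hreach : ∀ k m : ℕ, 1 ≤ cnt V k (initSeg x.val m) →
      x ∈ V k (k + cnt V k (initSeg x.val m)) := by
    intro k m
    induction m with
    | zero =>
      intro h
      exfalso
      have : initSeg x.val 0 = ([] : List A) := rfl
      rw [this, cnt] at h
      simp [cntAux] at h
    | succ m ih =>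
      intro h
      by_cases hsuc : cnt V k (initSeg x.val m) < cnt V k (initSeg x.val (m+1))
      · have h2 := hxV k m hsuc
        have h3 : cnt V k (initSeg x.val (m+1)) = cnt V k (initSeg x.val m) + 1 := by
          rw [hstep k m, if_pos ((hsucc_iff k m).mp hsuc)]
        rw [h3, show k + (cnt V k (initSeg x.val m) + 1) = k + cnt V k (initSeg x.val m) + 1
          from by ring]
        exact h2
      · have h4 : cnt V k (initSeg x.val m) ≤ cnt V k (initSeg x.val (m+1)) :=
          hmono k (by omega : m ≤ m + 1)
        have h3 : cnt V k (initSeg x.val (m+1)) = cnt V k (initSeg x.val m) := by omega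
        rw [h3] at h ⊢
        exact ih h
  have hunbdd : ∀ k : ℕ,
      (∀ M : ℕ, ∃ m, M ≤ m ∧ cnt V k (initSeg x.val m) < cnt V k (initSeg x.val (m+1))) →
      ∀ n, x ∈ V k n := by
    intro k hk n
    have hB : ∀ B : ℕ, ∃ m, B ≤ cnt V k (initSeg x.val m) := by
      intro B
      induction B with
      | zero => exact ⟨0, Nat.zero_le _⟩
      | succ B ih =>
        obtain ⟨m, hm⟩ := ih
        obtain ⟨m', hm', hsuc⟩ := hk m
        have h1 : cnt V k (initSeg x.val m) ≤ cnt V k (initSeg x.val m') := hmono k hm'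
        exact ⟨m' + 1, by omega⟩
    obtain ⟨m, hm⟩ := hB (n + 1)
    exact hVanti k (by omega : n ≤ k + cnt V k (initSeg x.val m)) (hreach k m (by omega))
  have hinf : ∀ k : ℕ, (∀ n, x ∈ V k n) →
      ∀ M : ℕ, ∃ m, M ≤ m ∧ cnt V k (initSeg x.val m) < cnt V k (initSeg x.val (m+1)) := by
    intro k hk M
    by_contra hcon
    push_neg at hcon
    have hconst : ∀ m, M ≤ m → cnt V k (initSeg x.val m) = cnt V k (initSeg x.val M) := by
      intro m hm
      induction m with
      | zero =>
        have : M = 0 := Nat.le_zero.mp hm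
        rw [this]
      | succ m ih =>
        rcases Nat.lt_or_ge m.succ M with h | h
        · omega
        rcases Nat.lt_or_ge M (m+1) with h2 | h2
        · have hMm : M ≤ m := by omega
          have h3 := hcon m hMm
          have h4 : cnt V k (initSeg x.val m) ≤ cnt V k (initSeg x.val (m+1)) :=
            hmono k (by omega : m ≤ m + 1)
          have h5 := ih hMm
          omega
        · have : M = m + 1 := by omega
          rw [this]
    obtain ⟨l, hl⟩ := exists_initSeg_subset_of_isOpen
      (hVopen k (k + cnt V k (initSeg x.val M) + 1)) (hk (k + cnt V k (initSeg x.val M) + 1))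
    have hm' : M ≤ max M l := le_max_left M l
    have hsub2 : cyl T (initSeg x.val (max M l + 1)) ⊆
        V k (k + cnt V k (initSeg x.val (max M l)) + 1) := by
      rw [hconst (max M l) hm']
      intro y hy
      apply hl
      simp only [cyl, Set.mem_setOf_eq, initSeg_length] at hy
      exact initSeg_eq_iff.mpr fun i hi =>
        initSeg_eq_iff.mp hy i (by have := le_max_right M l; omega)
    exact absurd ((hsucc_iff k (max M l)).mpr hsub2) (not_lt.mpr (hcon (max M l) hm'))
  -- evaluating the function u along the branch
  have huval : ∀ t : ℕ, uFun V q (initSeg x.val (t+1)) =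
      if h : ((Finset.range (t+1)).filter fun k =>
          cnt V k (initSeg x.val t) < cnt V k (initSeg x.val (t+1))).Nonempty
      then ((Finset.range (t+1)).filter fun k =>
          cnt V k (initSeg x.val t) < cnt V k (initSeg x.val (t+1))).sup' h fun k => (q k : ℝ)
      else -((t+1 : ℕ) : ℝ) := by
    intro t
    simp only [uFun, initSeg_length, initSeg_dropLast]
  -- lower bound
  have hlow : (f x : EReal) ≤
      Filter.limsup (fun t : ℕ => ((uFun V q (initSeg x.val (t+1)) : ℝ) : EReal))
        Filter.atTop := by
    by_contra hcon
    push_neg at hcon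
    obtain ⟨ρ, hρ1, hρ2⟩ := EReal.exists_rat_btwn_of_lt hcon
    obtain ⟨k, rfl⟩ := hq ρ
    have hfk : (q k : ℝ) ≤ f x := le_of_lt (by exact_mod_cast hρ2)
    have hall : ∀ n, x ∈ V k n := fun n => hVmem k n x hfk
    have hfreq : ∃ᶠ t in Filter.atTop,
        (((q k : ℝ) : EReal)) ≤ ((uFun V q (initSeg x.val (t+1)) : ℝ) : EReal) := by
      rw [Filter.frequently_atTop]
      intro N
      obtain ⟨m, hm, hsuc⟩ := hinf k hall (max N k)
      refine ⟨m, le_trans (le_max_left N k) hm, ?_⟩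
      have hkF : k ∈ (Finset.range (m+1)).filter fun j =>
          cnt V j (initSeg x.val m) < cnt V j (initSeg x.val (m+1)) := by
        simp only [Finset.mem_filter, Finset.mem_range]
        exact ⟨by have := le_max_right N k; omega, hsuc⟩
      have hne : ((Finset.range (m+1)).filter fun j =>
          cnt V j (initSeg x.val m) < cnt V j (initSeg x.val (m+1))).Nonempty := ⟨k, hkF⟩
      rw [huval m, dif_pos hne, EReal.coe_le_coe_iff]
      exact Finset.le_sup' (fun j => ((q j : ℝ))) hkF
    have hle := Filter.le_limsup_of_frequently_le hfreq
    exact absurd hρ1 (not_lt.mpr hle)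
  -- upper bound
  have hup : Filter.limsup (fun t : ℕ => ((uFun V q (initSeg x.val (t+1)) : ℝ) : EReal))
      Filter.atTop ≤ (f x : EReal) := by
    by_contra hcon
    push_neg at hcon
    obtain ⟨ρ, hρ1, hρ2⟩ := EReal.exists_rat_btwn_of_lt hcon
    obtain ⟨j₀, rfl⟩ := hq ρ
    have hnotin : ¬ ((q j₀ : ℝ) ≤ f x) := by
      have : (f x : ℝ) < (q j₀ : ℝ) := by exact_mod_cast hρ1
      exact not_le.mpr this
    have hex : ∃ n₀, x ∉ V j₀ n₀ := by
      by_contra hcc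
      push_neg at hcc
      exact hnotin (hVlevel j₀ x hcc)
    obtain ⟨n₀, hn₀⟩ := hex
    have hA : ∀ k m : ℕ, q j₀ ≤ q k → max j₀ n₀ ≤ k →
        ¬ cnt V k (initSeg x.val m) < cnt V k (initSeg x.val (m+1)) := by
      intro k m hqk hNk hsuc
      have hx1 : x ∈ V k (k + cnt V k (initSeg x.val m) + 1) := hxV k m hsuc
      have hj0k : j₀ ≤ max j₀ n₀ := le_max_left _ _
      have hx2 : x ∈ V j₀ (k + cnt V k (initSeg x.val m) + 1) :=
        hVmono k j₀ _ (by omega) hqk hx1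
      exact hn₀ (hVanti j₀ (by have := le_max_right j₀ n₀; omega) hx2)
    have hBk : ∀ k : ℕ, ∃ Mk : ℕ, ∀ m, Mk ≤ m → q j₀ ≤ q k →
        ¬ cnt V k (initSeg x.val m) < cnt V k (initSeg x.val (m+1)) := by
      intro k
      by_cases hcase : q j₀ ≤ q k
      · by_contra hcc
        push_neg at hcc
        have hk' : ∀ M : ℕ, ∃ m, M ≤ m ∧
            cnt V k (initSeg x.val m) < cnt V k (initSeg x.val (m+1)) := by
          intro M
          obtain ⟨m, h1, _, h3⟩ := hcc M
          exact ⟨m, h1, h3⟩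
        have hall := hunbdd k hk'
        have hx2 : x ∈ V j₀ (max j₀ n₀) :=
          hVmono k j₀ _ (le_max_left _ _) hcase (hall _)
        exact hn₀ (hVanti j₀ (le_max_right _ _) hx2)
      · exact ⟨0, fun m _ h => absurd h hcase⟩
    choose Mk hMk using hBk
    have hev : ∀ᶠ t in Filter.atTop,
        ((uFun V q (initSeg x.val (t+1)) : ℝ) : EReal) ≤ (((q j₀ : ℝ)) : EReal) := by
      rw [Filter.eventually_atTop]
      refine ⟨max ((Finset.range (max j₀ n₀)).sup Mk) ⌈-((q j₀ : ℝ))⌉₊, fun t ht => ?_⟩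
      have htM : (Finset.range (max j₀ n₀)).sup Mk ≤ t := le_trans (le_max_left _ _) ht
      rw [huval t]
      by_cases hne : ((Finset.range (t+1)).filter fun k =>
          cnt V k (initSeg x.val t) < cnt V k (initSeg x.val (t+1))).Nonempty
      · rw [dif_pos hne, EReal.coe_le_coe_iff]
        apply Finset.sup'_le
        intro k hk
        simp only [Finset.mem_filter, Finset.mem_range] at hk
        obtain ⟨hk1, hk2⟩ := hk
        by_cases hqk : q j₀ ≤ q k
        · exfalso
          by_cases hNk : max j₀ n₀ ≤ k
          · exact hA k t hqk hNk hk2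
          · push_neg at hNk
            have hMkM : Mk k ≤ (Finset.range (max j₀ n₀)).sup Mk :=
              Finset.le_sup (Finset.mem_range.mpr hNk)
            exact hMk k t (le_trans hMkM htM) hqk hk2
        · exact_mod_cast le_of_lt (not_le.mp hqk)
      · rw [dif_neg hne, EReal.coe_le_coe_iff]
        have h1 : (-(q j₀ : ℝ)) ≤ (⌈-((q j₀ : ℝ))⌉₊ : ℝ) := Nat.le_ceil _
        have h2 : ((⌈-((q j₀ : ℝ))⌉₊ : ℕ) : ℝ) ≤ (t : ℝ) := by
          exact_mod_cast le_trans (le_max_right _ _) ht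
        push_cast
        linarith
    have hle := Filter.limsup_le_of_le (by isBoundedDefault) hev
    exact absurd hρ2 (not_lt.mpr hle)
  exact le_antisymm hlow hup

theorem IsGδ.preimage' {X Y : Type*} [TopologicalSpace X] [TopologicalSpace Y] {s : Set Y}
    (hs : IsGδ s) {g : X → Y} (hg : Continuous g) : IsGδ (g ⁻¹' s) := by
  obtain ⟨G, hG, rfl⟩ := hs.eq_iInter_nat
  rw [Set.preimage_iInter]
  exact IsGδ.iInter_of_isOpen fun n => (hG n).preimage hg

theorem subgraph_gdelta_of_limsup {A : Type*} [TopologicalSpace A] [DiscreteTopology A]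
    {T : Set (List A)} (f : Branches T → ℝ) (h : IsLimsupFunction f) :
    IsGδ {p : Branches T × ℝ | p.2 ≤ f p.1} := by
  obtain ⟨u, hu⟩ := h
  have hkey : ∀ (r : ℝ) (x : Branches T), (r ≤ f x ↔
      ∀ ρ : ℚ, (ρ : ℝ) < r → ∀ N : ℕ, ∃ t, N ≤ t ∧ (ρ : ℝ) < u (initSeg x.val (t+1))) := by
    intro r x
    constructor
    · intro h ρ hρ N
      have h1 : (((ρ : ℝ)) : EReal) < (f x : EReal) := by exact_mod_cast lt_of_lt_of_le hρ h
      rw [hu x] at h1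
      have h2 := Filter.frequently_lt_of_lt_limsup (by isBoundedDefault) h1
      rw [Filter.frequently_atTop] at h2
      obtain ⟨t, ht, hlt⟩ := h2 N
      exact ⟨t, ht, by exact_mod_cast hlt⟩
    · intro h
      by_contra hcc
      push_neg at hcc
      have h1 : (f x : EReal) < (r : EReal) := by exact_mod_cast hcc
      obtain ⟨ρ, hρ1, hρ2⟩ := EReal.exists_rat_btwn_of_lt h1
      have hρr : (ρ : ℝ) < r := by exact_mod_cast hρ2
      have hfreq : ∃ᶠ t in Filter.atTop,
          (((ρ : ℝ)) : EReal) ≤ (u (initSeg x.val (t+1)) : EReal) := by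
        rw [Filter.frequently_atTop]
        intro N
        obtain ⟨t, ht, hlt⟩ := h ρ hρr N
        exact ⟨t, ht, by exact_mod_cast le_of_lt hlt⟩
      have hle := Filter.le_limsup_of_frequently_le hfreq
      rw [← hu x] at hle
      exact absurd hρ1 (not_lt.mpr hle)
  have hset : {p : Branches T × ℝ | p.2 ≤ f p.1} =
      ⋂ (ρ : ℚ), ⋂ (N : ℕ), ({p : Branches T × ℝ | p.2 ≤ (ρ : ℝ)} ∪
        ⋃ (t : ℕ), ⋃ (_ : N ≤ t),
          {p : Branches T × ℝ | (ρ : ℝ) < u (initSeg p.1.val (t+1))}) := by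
    ext p
    simp only [Set.mem_setOf_eq, Set.mem_iInter, Set.mem_union, Set.mem_iUnion]
    rw [hkey p.2 p.1]
    constructor
    · intro h ρ N
      by_cases hρ : (ρ : ℝ) < p.2
      · right
        obtain ⟨t, ht, h2⟩ := h ρ hρ N
        exact ⟨t, ht, h2⟩
      · exact Or.inl (not_lt.mp hρ)
    · intro h ρ hρ N
      rcases h ρ N with h1 | ⟨t, ht, h2⟩
      · exact absurd hρ (not_lt.mpr h1)
      · exact ⟨t, ht, h2⟩
  rw [hset]
  refine IsGδ.iInter fun ρ => IsGδ.iInter fun N => IsGδ.union ?_ ?_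
  · have : {p : Branches T × ℝ | p.2 ≤ (ρ : ℝ)} =
        ⋂ (n : ℕ), {p : Branches T × ℝ | p.2 < (ρ : ℝ) + 1/(n+1)} := by
      ext p
      simp only [Set.mem_setOf_eq, Set.mem_iInter]
      constructor
      · intro h n
        have hp : (0:ℝ) < 1/((n:ℝ)+1) := by positivity
        linarith
      · intro h
        by_contra hcc
        push_neg at hcc
        obtain ⟨n, hn⟩ := exists_nat_one_div_lt (by linarith : (0:ℝ) < p.2 - ρ)
        have := h n
        linarith
    rw [this]
    exact IsGδ.iInter_of_isOpen fun n => isOpen_lt continuous_snd continuous_const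
  · apply IsOpen.isGδ
    apply isOpen_iUnion
    intro t
    apply isOpen_iUnion
    intro _
    have : {p : Branches T × ℝ | (ρ : ℝ) < u (initSeg p.1.val (t+1))} =
        Prod.fst ⁻¹' {x : Branches T | initSeg x.val (t+1) ∈ {s | (ρ : ℝ) < u s}} := rfl
    rw [this]
    exact (isOpen_initSeg_set _ _).preimage continuous_fst

theorem levels_of_subgraph {A : Type*} [TopologicalSpace A]
    {T : Set (List A)} (f : Branches T → ℝ)
    (h : IsGδ {p : Branches T × ℝ | p.2 ≤ f p.1}) (r : ℝ) :
    IsGδ {x : Branches T | r ≤ f x} := by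
  have : {x : Branches T | r ≤ f x} =
      (fun x : Branches T => (x, r)) ⁻¹' {p : Branches T × ℝ | p.2 ≤ f p.1} := rfl
  rw [this]
  exact h.preimage' (continuous_id.prodMk continuous_const)


/-- Theorem 1 (C1 ↔ C4 ↔ C5): `f` is a limsup function iff its subgraph
`{(x, r) : f x ≥ r}` is a `Π⁰₂` (i.e. `G_δ`) subset of `X × ℝ`, iff for every `r ∈ ℝ`
the set `{x : f x ≥ r}` is a `Π⁰₂` (i.e. `G_δ`) subset of `X`. -/
theorem limsupFunction_iff_subgraph_Gdelta
    {A : Type*} [Countable A] [Nonempty A] [TopologicalSpace A] [DiscreteTopology A]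
    {T : Set (List A)} (hT : IsPrunedTree T) (f : Branches T → ℝ) :
    (IsLimsupFunction f ↔ IsGδ {p : Branches T × ℝ | p.2 ≤ f p.1}) ∧
    (IsLimsupFunction f ↔ ∀ r : ℝ, IsGδ {x : Branches T | r ≤ f x}) := by
  have H1 := fun h => subgraph_gdelta_of_limsup f h
  have H2 := levels_of_subgraph f
  have H3 := isLimsupFunction_of_levels f
  exact ⟨⟨H1, fun h => H3 (H2 h)⟩, ⟨fun h => H2 (H1 h), H3⟩⟩
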